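/- arXiv:2301.03493 — 2 statements merged into one kernel-verified Lean document; each statement's English description precedes it below -/
import Mathlib

section
/- Let 0 < ρ₀ < 1, 0 < θ < 1, and η > 0 be reals, and let (Δ_i)_{i≥1} be nonnegative reals with Δ_i ≤ ρ₀^i for all i and ∑_{i=1}^∞ Δ_i = η. Then for every natural number i₀ ≥ 1, ∑_{i=1}^∞ θ^i Δ_i ≥ (η - ρ₀^{i₀}/(1 - ρ₀)) θ^{i₀} + ρ₀^{i₀} θ^{i₀}/(1 - ρ₀ θ). -/
theorem weak_duality_lower_bound (ρ₀ θ η : ℝ)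
    (hρ0 : 0 < ρ₀) (hρ1 : ρ₀ < 1) (hθ0 : 0 < θ) (hθ1 : θ < 1) (hη : 0 < η)
    (Δ : ℕ → ℝ) (hΔ0 : ∀ i, 1 ≤ i → 0 ≤ Δ i)
    (hΔρ : ∀ i, 1 ≤ i → Δ i ≤ ρ₀ ^ i)
    (hsum : ∑' i : ℕ, Δ (i + 1) = η)
    (i₀ : ℕ) (hi₀ : 1 ≤ i₀) :
    (η - ρ₀ ^ i₀ / (1 - ρ₀)) * θ ^ i₀ + ρ₀ ^ i₀ * θ ^ i₀ / (1 - ρ₀ * θ) ≤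
      ∑' i : ℕ, θ ^ (i + 1) * Δ (i + 1) := by
  have hρθ : 0 < ρ₀ * θ := mul_pos hρ0 hθ0
  have hρθ1 : ρ₀ * θ < 1 := by nlinarith
  have h1ρ : (0:ℝ) < 1 - ρ₀ := by linarith
  have h1ρθ : (0:ℝ) < 1 - ρ₀ * θ := by linarith
  -- summability of basic geometric sequences
  have hgeoρ : Summable (fun i : ℕ => ρ₀ ^ (i + 1)) := by
    simpa [pow_succ, mul_comm] using (summable_geometric_of_lt_one hρ0.le hρ1).mul_left ρ₀
  have hgeoρθ : Summable (fun i : ℕ => (ρ₀ * θ) ^ (i + 1)) := by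
    simpa [pow_succ, mul_comm] using
      (summable_geometric_of_lt_one hρθ.le hρθ1).mul_left (ρ₀ * θ)
  have hΔsummable : Summable (fun i : ℕ => Δ (i + 1)) :=
    Summable.of_nonneg_of_le (fun i => hΔ0 _ (by omega)) (fun i => hΔρ _ (by omega)) hgeoρ
  have hθΔ : Summable (fun i : ℕ => θ ^ (i + 1) * Δ (i + 1)) := by
    refine Summable.of_nonneg_of_le
      (fun i => mul_nonneg (pow_nonneg hθ0.le _) (hΔ0 _ (by omega))) (fun i => ?_) hgeoρ
    calc θ ^ (i+1) * Δ (i+1) ≤ 1 * Δ (i+1) := by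
          exact mul_le_mul_of_nonneg_right (pow_le_one₀ hθ0.le hθ1.le) (hΔ0 _ (by omega))
      _ = Δ (i+1) := one_mul _
      _ ≤ ρ₀ ^ (i+1) := hΔρ _ (by omega)
  -- lower bound sequence
  set F : ℕ → ℝ := fun i => (ρ₀ * θ) ^ (i + 1) - θ ^ i₀ * ρ₀ ^ (i + 1) with hF
  set h : ℕ → ℝ := fun i => if i₀ ≤ i then F i else 0 with hh
  have hFsum : Summable F := hgeoρθ.sub (hgeoρ.mul_left (θ ^ i₀))
  have hhsum : Summable h := by
    have : h = Set.indicator {i : ℕ | i₀ ≤ i} F := by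
      funext i
      simp [hh, Set.indicator_apply]
    rw [this]
    exact hFsum.indicator _
  set g : ℕ → ℝ := fun i => (θ ^ (i + 1) - θ ^ i₀) * Δ (i + 1) with hg
  have hgsum : Summable g := by
    have : g = fun i => θ ^ (i + 1) * Δ (i + 1) - θ ^ i₀ * Δ (i + 1) := by
      funext i; ring
    rw [this]
    exact hθΔ.sub (hΔsummable.mul_left _)
  have hle : ∀ i, h i ≤ g i := by
    intro i
    by_cases hcase : i₀ ≤ i
    · simp only [hh, hg, hF, if_pos hcase]
      have hθle : θ ^ (i + 1) - θ ^ i₀ ≤ 0 := by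
        have := pow_le_pow_of_le_one hθ0.le hθ1.le (by omega : i₀ ≤ i + 1)
        linarith
      have : (θ ^ (i + 1) - θ ^ i₀) * ρ₀ ^ (i + 1) ≤ (θ ^ (i + 1) - θ ^ i₀) * Δ (i + 1) :=
        mul_le_mul_of_nonpos_left (hΔρ _ (by omega)) hθle
      calc (ρ₀ * θ) ^ (i + 1) - θ ^ i₀ * ρ₀ ^ (i + 1)
          = (θ ^ (i + 1) - θ ^ i₀) * ρ₀ ^ (i + 1) := by rw [mul_pow]; ring
        _ ≤ (θ ^ (i + 1) - θ ^ i₀) * Δ (i + 1) := this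
    · simp only [hh, hg, if_neg hcase]
      have hθge : θ ^ i₀ ≤ θ ^ (i + 1) :=
        pow_le_pow_of_le_one hθ0.le hθ1.le (by omega)
      exact mul_nonneg (by linarith) (hΔ0 _ (by omega))
  have hkey : ∑' i, h i ≤ ∑' i, g i := Summable.tsum_le_tsum hle hhsum hgsum
  -- compute ∑' g
  have hgval : ∑' i, g i = (∑' i : ℕ, θ ^ (i + 1) * Δ (i + 1)) - θ ^ i₀ * η := by
    have : g = fun i => θ ^ (i + 1) * Δ (i + 1) - θ ^ i₀ * Δ (i + 1) := by
      funext i; ring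
    rw [this, Summable.tsum_sub hθΔ (hΔsummable.mul_left _), tsum_mul_left, hsum]
  -- compute ∑' h
  have hshift : ∑' i, h i = ∑' j : ℕ, h (j + i₀) := by
    refine (Function.Injective.tsum_eq (g := fun j : ℕ => j + i₀) ?_ ?_).symm
    · exact add_left_injective i₀
    · intro i hi
      simp only [Function.mem_support, hh] at hi
      have : i₀ ≤ i := by by_contra hc; simp [hc] at hi
      exact ⟨i - i₀, by simp; omega⟩
  have hhval : ∑' i, h i =
      (ρ₀ * θ) ^ (i₀ + 1) * (1 - ρ₀ * θ)⁻¹ - θ ^ i₀ * ρ₀ ^ (i₀ + 1) * (1 - ρ₀)⁻¹ := by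
    rw [hshift]
    have heq : (fun j : ℕ => h (j + i₀)) =
        fun j : ℕ => (ρ₀ * θ) ^ (i₀ + 1) * (ρ₀ * θ) ^ j - θ ^ i₀ * ρ₀ ^ (i₀ + 1) * ρ₀ ^ j := by
      funext j
      simp only [hh, hF, if_pos (by omega : i₀ ≤ j + i₀)]
      rw [show j + i₀ + 1 = (i₀ + 1) + j by omega, pow_add, pow_add]
      ring
    rw [heq, Summable.tsum_sub
      ((summable_geometric_of_lt_one hρθ.le hρθ1).mul_left _)
      ((summable_geometric_of_lt_one hρ0.le hρ1).mul_left _),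
      tsum_mul_left, tsum_mul_left,
      tsum_geometric_of_lt_one hρθ.le hρθ1, tsum_geometric_of_lt_one hρ0.le hρ1]
  -- conclude
  have hfinal : (η - ρ₀ ^ i₀ / (1 - ρ₀)) * θ ^ i₀ + ρ₀ ^ i₀ * θ ^ i₀ / (1 - ρ₀ * θ)
      = θ ^ i₀ * η + ((ρ₀ * θ) ^ (i₀ + 1) * (1 - ρ₀ * θ)⁻¹
        - θ ^ i₀ * ρ₀ ^ (i₀ + 1) * (1 - ρ₀)⁻¹) := by
    rw [mul_pow, pow_succ, pow_succ]
    field_simp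
    ring
  rw [hfinal]
  have := hkey
  rw [hhval, hgval] at this
  linarith
end

section
/- Let 0 < ρ₀ < 1 and 0 < θ ≤ ρ₀, and set α := ln(θ)/ln(ρ₀) ≥ 1. Let (Δ_i)_{i≥1} be nonnegative reals with Δ_i ≤ ρ₀^i for all i, and set η := ∑_{i=1}^∞ Δ_i, assumed positive. Then ∑_{i=1}^∞ θ^i Δ_i ≥ (ρ₀ θ / (1 - ρ₀ θ)) ((1 - ρ₀) η)^{1+α}. -/
set_option maxHeartbeats 1000000


theorem weighted_sum_poly_lower_bound (ρ₀ θ : ℝ)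
    (hρ0 : 0 < ρ₀) (hρ1 : ρ₀ < 1) (hθ0 : 0 < θ) (hθρ : θ ≤ ρ₀)
    (Δ : ℕ → ℝ) (hΔ0 : ∀ i, 1 ≤ i → 0 ≤ Δ i)
    (hΔρ : ∀ i, 1 ≤ i → Δ i ≤ ρ₀ ^ i)
    (η : ℝ) (hη : η = ∑' i : ℕ, Δ (i + 1)) (hηpos : 0 < η)
    (α : ℝ) (hα : α = Real.log θ / Real.log ρ₀) :
    1 ≤ α ∧
    (ρ₀ * θ / (1 - ρ₀ * θ)) * ((1 - ρ₀) * η) ^ (1 + α) ≤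
      ∑' i : ℕ, θ ^ (i + 1) * Δ (i + 1) := by
  have hθ1 : θ < 1 := lt_of_le_of_lt hθρ hρ1
  have hu : (0:ℝ) < 1 - ρ₀ := by linarith
  have hρθ0 : 0 < ρ₀ * θ := mul_pos hρ0 hθ0
  have hρθ1 : ρ₀ * θ < 1 := by nlinarith
  have hv : (0:ℝ) < 1 - ρ₀ * θ := by linarith
  have hθρ1 : θ * ρ₀ < 1 := by nlinarith
  have hv' : (0:ℝ) < 1 - θ * ρ₀ := by linarith
  have hlρ : Real.log ρ₀ < 0 := Real.log_neg hρ0 hρ1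
  have hlθρ : Real.log θ ≤ Real.log ρ₀ := Real.log_le_log hθ0 hθρ
  have hlθ : Real.log θ < 0 := Real.log_neg hθ0 hθ1
  have hα1 : 1 ≤ α := by
    rw [hα, le_div_iff_of_neg hlρ]; linarith
  refine ⟨hα1, ?_⟩
  -- summability facts
  have hgeoρ : Summable (fun n : ℕ => ρ₀ ^ n) := summable_geometric_of_lt_one hρ0.le hρ1
  have hgeoθρ : Summable (fun n : ℕ => (θ * ρ₀) ^ n) :=
    summable_geometric_of_lt_one (by positivity) hθρ1
  have hΔs : Summable (fun n : ℕ => Δ (n + 1)) := by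
    apply Summable.of_nonneg_of_le (fun n => hΔ0 (n + 1) (by omega)) (fun n => ?_)
      (hgeoρ.mul_left ρ₀)
    calc Δ (n + 1) ≤ ρ₀ ^ (n + 1) := hΔρ _ (by omega)
      _ = ρ₀ * ρ₀ ^ n := by ring
  have hTs : Summable (fun n : ℕ => θ ^ (n + 1) * Δ (n + 1)) := by
    apply Summable.of_nonneg_of_le
      (fun n => mul_nonneg (by positivity) (hΔ0 _ (by omega))) (fun n => ?_)
      (hgeoθρ.mul_left (θ * ρ₀))
    calc θ ^ (n + 1) * Δ (n + 1) ≤ θ ^ (n + 1) * ρ₀ ^ (n + 1) :=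
          mul_le_mul_of_nonneg_left (hΔρ _ (by omega)) (by positivity)
      _ = (θ * ρ₀) * (θ * ρ₀) ^ n := by ring
  have hηle : η ≤ ρ₀ * (1 - ρ₀)⁻¹ := by
    rw [hη]
    have h1 : ∑' n : ℕ, Δ (n + 1) ≤ ∑' n : ℕ, ρ₀ * ρ₀ ^ n := by
      apply Summable.tsum_le_tsum (fun n => ?_) hΔs (hgeoρ.mul_left ρ₀)
      calc Δ (n + 1) ≤ ρ₀ ^ (n + 1) := hΔρ _ (by omega)
        _ = ρ₀ * ρ₀ ^ n := by ring
    rwa [tsum_mul_left, tsum_geometric_of_lt_one hρ0.le hρ1] at h1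
  set x : ℝ := (1 - ρ₀) * η with hxdef
  have hx0 : 0 < x := mul_pos hu hηpos
  have hxρ : x ≤ ρ₀ := by
    calc x ≤ (1 - ρ₀) * (ρ₀ * (1 - ρ₀)⁻¹) := mul_le_mul_of_nonneg_left hηle hu.le
      _ = ρ₀ := by field_simp
  have hlx : Real.log x ≤ Real.log ρ₀ := Real.log_le_log hx0 hxρ
  set L : ℝ := Real.log x / Real.log ρ₀ with hLdef
  have hL1 : 1 ≤ L := by rw [hLdef, le_div_iff_of_neg hlρ]; linarith
  set i₀ : ℕ := ⌈L⌉₊ with hi₀def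
  have hiL : L ≤ (i₀ : ℝ) := Nat.le_ceil L
  have hiL1 : (i₀ : ℝ) ≤ L + 1 := le_of_lt (Nat.ceil_lt_add_one (by linarith))
  set P : ℝ := θ ^ i₀ with hPdef
  set t : ℝ := ρ₀ ^ i₀ with htdef
  have hP0 : 0 < P := pow_pos hθ0 _
  have ht0 : 0 < t := pow_pos hρ0 _
  have hLmul : L * Real.log ρ₀ = Real.log x := div_mul_cancel₀ _ hlρ.ne
  have htx : t ≤ x := by
    have h1 : (i₀ : ℝ) * Real.log ρ₀ ≤ Real.log x := by nlinarith [hiL, hlρ]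
    calc t = Real.exp (Real.log (ρ₀ ^ i₀)) := (Real.exp_log ht0).symm
      _ = Real.exp ((i₀ : ℝ) * Real.log ρ₀) := by rw [Real.log_pow]
      _ ≤ Real.exp (Real.log x) := Real.exp_le_exp.2 h1
      _ = x := Real.exp_log hx0
  have hK : ρ₀ * θ * x ^ α ≤ P := by
    have hxa : x ^ α = Real.exp (Real.log x * α) := Real.rpow_def_of_pos hx0 α
    have hαx : Real.log x * α = L * Real.log θ := by
      rw [hα, hLdef]; field_simp
    have h2 : (L + 1) * Real.log θ ≤ (i₀ : ℝ) * Real.log θ := by nlinarith [hiL1, hlθ]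
    calc ρ₀ * θ * x ^ α = Real.exp (Real.log ρ₀ + Real.log θ + Real.log x * α) := by
          rw [Real.exp_add, Real.exp_add, Real.exp_log hρ0, Real.exp_log hθ0, hxa]
      _ ≤ Real.exp ((i₀ : ℝ) * Real.log θ) := by
          apply Real.exp_le_exp.2; rw [hαx]; nlinarith [h2, hlρ]
      _ = P := by rw [← Real.log_pow, Real.exp_log hP0]
  -- decomposition of the sums at i₀
  have hsplitΔ : (∑ n ∈ Finset.range i₀, Δ (n + 1)) + ∑' n : ℕ, Δ (n + i₀ + 1) = η := by
    rw [hη]; exact Summable.sum_add_tsum_nat_add i₀ hΔs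
  have hsplitT : (∑ n ∈ Finset.range i₀, θ ^ (n + 1) * Δ (n + 1))
      + ∑' n : ℕ, θ ^ (n + i₀ + 1) * Δ (n + i₀ + 1) = ∑' n : ℕ, θ ^ (n + 1) * Δ (n + 1) :=
    Summable.sum_add_tsum_nat_add i₀ hTs
  have hhead : P * ∑ n ∈ Finset.range i₀, Δ (n + 1)
      ≤ ∑ n ∈ Finset.range i₀, θ ^ (n + 1) * Δ (n + 1) := by
    rw [Finset.mul_sum]
    apply Finset.sum_le_sum
    intro n hn
    have hn' : n + 1 ≤ i₀ := Finset.mem_range.1 hn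
    exact mul_le_mul_of_nonneg_right (pow_le_pow_of_le_one hθ0.le hθ1.le hn')
      (hΔ0 _ (by omega))
  have hΔs' : Summable (fun n : ℕ => Δ (n + i₀ + 1)) :=
    (summable_nat_add_iff (f := fun n => Δ (n + 1)) i₀).2 hΔs
  have hf : ∀ n : ℕ, P * Δ (n + i₀ + 1)
      + ((θ * ρ₀) ^ (i₀ + 1) * (θ * ρ₀) ^ n - P * (ρ₀ ^ (i₀ + 1) * ρ₀ ^ n))
      ≤ θ ^ (n + i₀ + 1) * Δ (n + i₀ + 1) := by
    intro n
    have e1 : (θ * ρ₀) ^ (i₀ + 1) * (θ * ρ₀) ^ n = θ ^ (n + i₀ + 1) * ρ₀ ^ (n + i₀ + 1) := by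
      rw [← pow_add, mul_pow, show i₀ + 1 + n = n + i₀ + 1 from by omega]
    have e2 : ρ₀ ^ (i₀ + 1) * ρ₀ ^ n = ρ₀ ^ (n + i₀ + 1) := by
      rw [← pow_add, show i₀ + 1 + n = n + i₀ + 1 from by omega]
    have hd : Δ (n + i₀ + 1) ≤ ρ₀ ^ (n + i₀ + 1) := hΔρ _ (by omega)
    have hd0 : 0 ≤ Δ (n + i₀ + 1) := hΔ0 _ (by omega)
    have hp : θ ^ (n + i₀ + 1) ≤ P := pow_le_pow_of_le_one hθ0.le hθ1.le (by omega)
    rw [e1, e2]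
    have key : 0 ≤ (P - θ ^ (n + i₀ + 1)) * (ρ₀ ^ (n + i₀ + 1) - Δ (n + i₀ + 1)) :=
      mul_nonneg (sub_nonneg.2 hp) (sub_nonneg.2 hd)
    have key2 : (P - θ ^ (n + i₀ + 1)) * (ρ₀ ^ (n + i₀ + 1) - Δ (n + i₀ + 1))
        = P * ρ₀ ^ (n + i₀ + 1) - P * Δ (n + i₀ + 1) - θ ^ (n + i₀ + 1) * ρ₀ ^ (n + i₀ + 1)
          + θ ^ (n + i₀ + 1) * Δ (n + i₀ + 1) := by ring
    rw [key2] at key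
    linarith [key]
  have hfs : Summable (fun n : ℕ => P * Δ (n + i₀ + 1)
      + ((θ * ρ₀) ^ (i₀ + 1) * (θ * ρ₀) ^ n - P * (ρ₀ ^ (i₀ + 1) * ρ₀ ^ n))) :=
    (hΔs'.mul_left P).add ((hgeoθρ.mul_left _).sub ((hgeoρ.mul_left (ρ₀ ^ (i₀ + 1))).mul_left P))
  have htail : ∑' n : ℕ, (P * Δ (n + i₀ + 1)
      + ((θ * ρ₀) ^ (i₀ + 1) * (θ * ρ₀) ^ n - P * (ρ₀ ^ (i₀ + 1) * ρ₀ ^ n)))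
      ≤ ∑' n : ℕ, θ ^ (n + i₀ + 1) * Δ (n + i₀ + 1) :=
    Summable.tsum_le_tsum hf hfs ((summable_nat_add_iff (f := fun n => θ ^ (n + 1) * Δ (n + 1)) i₀).2 hTs)
  have htsumf : ∑' n : ℕ, (P * Δ (n + i₀ + 1)
      + ((θ * ρ₀) ^ (i₀ + 1) * (θ * ρ₀) ^ n - P * (ρ₀ ^ (i₀ + 1) * ρ₀ ^ n)))
      = P * (∑' n : ℕ, Δ (n + i₀ + 1))
        + ((θ * ρ₀) ^ (i₀ + 1) * (1 - θ * ρ₀)⁻¹ - P * (ρ₀ ^ (i₀ + 1) * (1 - ρ₀)⁻¹)) := by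
    rw [Summable.tsum_add (hΔs'.mul_left P)
        ((hgeoθρ.mul_left _).sub ((hgeoρ.mul_left (ρ₀ ^ (i₀ + 1))).mul_left P)),
      tsum_mul_left,
      Summable.tsum_sub (hgeoθρ.mul_left _) ((hgeoρ.mul_left (ρ₀ ^ (i₀ + 1))).mul_left P),
      tsum_mul_left, tsum_mul_left, tsum_mul_left,
      tsum_geometric_of_lt_one (by positivity) hθρ1,
      tsum_geometric_of_lt_one hρ0.le hρ1]
  have hmain : P * η + ((θ * ρ₀) ^ (i₀ + 1) * (1 - θ * ρ₀)⁻¹ - P * (ρ₀ ^ (i₀ + 1) * (1 - ρ₀)⁻¹))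
      ≤ ∑' n : ℕ, θ ^ (n + 1) * Δ (n + 1) := by
    rw [htsumf] at htail
    have h1 : P * (∑ n ∈ Finset.range i₀, Δ (n + 1)) + P * (∑' n : ℕ, Δ (n + i₀ + 1))
        = P * η := by rw [← mul_add, hsplitΔ]
    linarith [hhead, htail, h1, hsplitT.le, hsplitT.ge]
  refine le_trans ?_ hmain
  have hxa : x ^ (1 + α) = x * x ^ α := by
    rw [Real.rpow_add hx0, Real.rpow_one]
  have e3 : (θ * ρ₀) ^ (i₀ + 1) = θ * ρ₀ * (P * t) := by
    rw [hPdef, htdef, mul_pow, pow_succ, pow_succ]; ring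
  have e4 : ρ₀ ^ (i₀ + 1) = ρ₀ * t := by rw [htdef, pow_succ]; ring
  rw [hxa, e3, e4]
  have h5 : ρ₀ * θ * x ^ α * x ≤ P * x := mul_le_mul_of_nonneg_right hK hx0.le
  have hiden : P * η + (θ * ρ₀ * (P * t) * (1 - θ * ρ₀)⁻¹ - P * (ρ₀ * t * (1 - ρ₀)⁻¹))
      - P * x * (1 - ρ₀ * θ)⁻¹
      = ρ₀ * P * (1 - θ) * (x - t) / ((1 - ρ₀) * (1 - ρ₀ * θ)) := by
    rw [hxdef]; field_simp; ring
  have hnn : 0 ≤ ρ₀ * P * (1 - θ) * (x - t) / ((1 - ρ₀) * (1 - ρ₀ * θ)) := by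
    apply div_nonneg _ (by positivity)
    have h6 : (0:ℝ) ≤ x - t := by linarith
    have h7 : (0:ℝ) ≤ 1 - θ := by linarith
    positivity
  calc ρ₀ * θ / (1 - ρ₀ * θ) * (x * x ^ α) = ρ₀ * θ * x ^ α * x * (1 - ρ₀ * θ)⁻¹ := by ring
    _ ≤ P * x * (1 - ρ₀ * θ)⁻¹ := mul_le_mul_of_nonneg_right h5 (by positivity)
    _ ≤ P * η + (θ * ρ₀ * (P * t) * (1 - θ * ρ₀)⁻¹ - P * (ρ₀ * t * (1 - ρ₀)⁻¹)) := by
        linarith [hiden, hnn]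
end
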